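/- Let G be a finite group, u ∈ Aut(G), and x ∈ G with ord(x) = 2m > 4 and u(x) = x^{-1}. If the cyclic subgroup ⟨x⟩ is contained in the twisted conjugacy class O^{G,u}_x, then ⟨x⟩ is a subrack of O^{G,u}_x isomorphic to the dihedral rack D_{2m}, and O^{G,u}_x is of type D. -/

import Mathlib

/-- A nonempty subset of `X` closed under the operation `op` (a subrack). -/
def IsSubrackOf {X : Type*} (op : X → X → X) (Y : Set X) : Prop :=
  Y.Nonempty ∧ ∀ a ∈ Y, ∀ b ∈ Y, op a b ∈ Y

/-- The rack with underlying set `C ⊆ X` and operation `op` is of type D: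
there is a decomposable subrack `R ⊔ S` of `C` and `r ∈ R`, `s ∈ S` with
`r ▹ (s ▹ (r ▹ s)) ≠ s`. -/
def IsTypeDOn {X : Type*} (op : X → X → X) (C : Set X) : Prop :=
  ∃ R S : Set X, R ⊆ C ∧ S ⊆ C ∧ IsSubrackOf op R ∧ IsSubrackOf op S ∧
    Disjoint R S ∧
    (∀ r ∈ R, ∀ s ∈ S, op r s ∈ S) ∧ (∀ s ∈ S, ∀ r ∈ R, op s r ∈ R) ∧
    ∃ r ∈ R, ∃ s ∈ S, op r (op s (op r s)) ≠ s

/-- The rack operation `y ▹ z = y · u(z · y⁻¹)` on a group `G` with `u ∈ Aut(G)`. -/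
def twOp {G : Type*} [Group G] (u : G ≃* G) (y z : G) : G :=
  y * u (z * y⁻¹)

/-- The twisted conjugacy class `O^{G,u}_x`, the orbit of `x` under the action
`y ⇀_u x = y · x · u(y)⁻¹`. -/
def twClass {G : Type*} [Group G] (u : G ≃* G) (x : G) : Set G :=
  {y | ∃ g : G, g * x * (u g)⁻¹ = y}

lemma twOp_zpow {G : Type*} [Group G] (u : G ≃* G) (x : G) (hux : u x = x⁻¹)
    (a b : ℤ) : twOp u (x ^ a) (x ^ b) = x ^ (2 * a - b) := by
  unfold twOp
  rw [← zpow_neg, ← zpow_add, map_zpow, hux, inv_zpow, ← zpow_neg, ← zpow_add]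
  congr 1
  ring

/-- Let `x ∈ G` with `ord(x) = 2m > 4` and `u(x) = x⁻¹`. If `⟨x⟩ ⊆ O^{G,u}_x`,
then `⟨x⟩` is a subrack of `O^{G,u}_x` isomorphic to the dihedral rack `D_{2m}`
(via `i ↦ xⁱ`), and `O^{G,u}_x` is of type D. -/
theorem twClass_isTypeD_of_zpowers_subset {G : Type*} [Group G] [Fintype G]
    (u : G ≃* G) (x : G) (m : ℕ) (hord : orderOf x = 2 * m) (hm : 4 < 2 * m)
    (hux : u x = x⁻¹) (hsub : (Subgroup.zpowers x : Set G) ⊆ twClass u x) :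
    (∀ a ∈ (Subgroup.zpowers x : Set G), ∀ b ∈ (Subgroup.zpowers x : Set G),
      twOp u a b ∈ (Subgroup.zpowers x : Set G)) ∧
    Set.BijOn (fun i : ZMod (2 * m) => x ^ i.val) Set.univ (Subgroup.zpowers x : Set G) ∧
    (∀ i j : ZMod (2 * m), x ^ (2 * i - j).val = twOp u (x ^ i.val) (x ^ j.val)) ∧
    IsTypeDOn (twOp u) (twClass u x) := by
  haveI : NeZero (2 * m) := ⟨by omega⟩
  have hz : ∀ a b : ℤ, twOp u (x ^ a) (x ^ b) = x ^ (2 * a - b) := twOp_zpow u x hux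
  have hmod : ∀ a b : ℤ, x ^ a = x ^ b ↔ a ≡ b [ZMOD (2 * m)] := by
    intro a b; rw [zpow_eq_zpow_iff_modEq, hord]; norm_cast
  refine ⟨?_, ⟨?_, ?_, ?_⟩, ?_, ?_⟩
  · rintro a ⟨i, rfl⟩ b ⟨j, rfl⟩
    rw [hz]; exact ⟨2 * i - j, rfl⟩
  · intro i _; exact ⟨(i.val : ℤ), zpow_natCast x i.val⟩
  · intro i _ j _ hij
    simp only at hij
    have h1 : i.val % (2 * m) = j.val % (2 * m) := by
      have := pow_eq_pow_iff_modEq.mp hij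
      rwa [hord, Nat.ModEq] at this
    rw [Nat.mod_eq_of_lt (ZMod.val_lt i), Nat.mod_eq_of_lt (ZMod.val_lt j)] at h1
    exact ZMod.val_injective _ h1
  · rintro g ⟨k, rfl⟩
    refine ⟨((k : ZMod (2 * m))), Set.mem_univ _, ?_⟩
    simp only
    rw [← zpow_natCast, hmod, Int.ModEq]
    have : (((((k : ZMod (2 * m))).val : ℤ)) : ZMod (2 * m)) = ((k : ℤ) : ZMod (2 * m)) := by
      push_cast [ZMod.natCast_val, ZMod.cast_id]
      rfl
    exact (ZMod.intCast_eq_intCast_iff _ _ _).mp this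
  · intro i j
    rw [← zpow_natCast x i.val, ← zpow_natCast x j.val, hz, ← zpow_natCast x]
    rw [hmod, Int.ModEq]
    apply (ZMod.intCast_eq_intCast_iff _ _ _).mp
    push_cast [ZMod.natCast_val, ZMod.cast_id]
    ring
  · -- Type D
    refine ⟨{g | ∃ k : ℤ, x ^ (2 * k) = g}, {g | ∃ k : ℤ, x ^ (2 * k + 1) = g},
      ?_, ?_, ⟨⟨1, 0, by simp⟩, ?_⟩, ⟨⟨x, 0, by simp⟩, ?_⟩, ?_, ?_, ?_, ?_⟩
    · rintro g ⟨k, rfl⟩; exact hsub ⟨2 * k, rfl⟩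
    · rintro g ⟨k, rfl⟩; exact hsub ⟨2 * k + 1, rfl⟩
    · rintro a ⟨k, rfl⟩ b ⟨l, rfl⟩
      rw [hz]; exact ⟨2 * k - l, by congr 1; ring⟩
    · rintro a ⟨k, rfl⟩ b ⟨l, rfl⟩
      rw [hz]; exact ⟨2 * k - l, by congr 1; ring⟩
    · rw [Set.disjoint_left]
      rintro g ⟨k, rfl⟩ ⟨l, hl⟩
      have h1 : x ^ (2 * l + 1 - 2 * k) = 1 := by
        rw [zpow_sub, hl, mul_inv_cancel]
      have h2 : ((2 * m : ℕ) : ℤ) ∣ (2 * l + 1 - 2 * k) := by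
        rw [← hord]; exact orderOf_dvd_iff_zpow_eq_one.mpr h1
      have h3 : (2 : ℤ) ∣ (2 * l + 1 - 2 * k) :=
        dvd_trans ⟨(m : ℤ), by push_cast; ring⟩ h2
      omega
    · rintro a ⟨k, rfl⟩ b ⟨l, rfl⟩
      rw [hz]; exact ⟨2 * k - l - 1, by congr 1; ring⟩
    · rintro a ⟨k, rfl⟩ b ⟨l, rfl⟩
      rw [hz]; exact ⟨2 * k + 1 - l, by congr 1; ring⟩
    · refine ⟨x ^ (2 * (0 : ℤ)), ⟨0, rfl⟩, x ^ (2 * (0 : ℤ) + 1), ⟨0, rfl⟩, ?_⟩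
      rw [hz, hz, hz]
      intro h
      have h5 := ((hmod _ _).mp h).dvd
      have h6 : (2 * (m:ℤ)) ∣ 4 := by convert h5 using 1; norm_num
      have h7 := Int.le_of_dvd (by norm_num) h6
      omega
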